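/- Let M_1, ..., M_n be proper linear subspaces of ℝ^p, let A be a nonzero symmetric p×p real matrix, and let V = {y ∈ ℝ^p : yᵀAy = 0}. Then there exists a vector γ with non-negative integer coordinates such that γ ∉ M_1 ∪ ... ∪ M_n and γ ∉ V. -/

import Mathlib

open Matrix

/-- A nonzero multivariate real polynomial has a non-vanishing point with
natural-number coordinates. -/
lemma exists_nat_eval_ne_zero : ∀ (N : ℕ) (F : MvPolynomial (Fin N) ℝ), F ≠ 0 →
    ∃ r : Fin N → ℕ, MvPolynomial.eval (fun i => (r i : ℝ)) F ≠ 0 := by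
  intro N
  induction N with
  | zero =>
    intro F hF
    obtain ⟨a, rfl⟩ := MvPolynomial.C_surjective (Fin 0) F
    refine ⟨fun i => 0, ?_⟩
    simpa using fun h => hF (by rw [h, map_zero])
  | succ N IH =>
    intro F hF
    set φ := MvPolynomial.finSuccEquiv ℝ N F with hφdef
    have hφ : φ ≠ 0 := fun h => hF ((MvPolynomial.finSuccEquiv ℝ N).injective (by simp [← hφdef, h]))
    have hlc : φ.leadingCoeff ≠ 0 := Polynomial.leadingCoeff_ne_zero.mpr hφ
    obtain ⟨r, hr⟩ := IH _ hlc
    set ψ := φ.map (MvPolynomial.eval fun i => (r i : ℝ)) with hψdef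
    have hψ : ψ ≠ 0 := by
      intro h
      apply hr
      have h2 : ψ.coeff φ.natDegree = 0 := by rw [h, Polynomial.coeff_zero]
      rw [hψdef, Polynomial.coeff_map] at h2
      rw [Polynomial.leadingCoeff]
      exact h2
    have hroots : {x : ℝ | ψ.IsRoot x}.Finite := Polynomial.finite_setOf_isRoot hψ
    have hinf : (Set.range (fun m : ℕ => (m : ℝ))).Infinite :=
      Set.infinite_range_of_injective Nat.cast_injective
    obtain ⟨x, hxmem, hxroot⟩ : ∃ x ∈ Set.range (fun m : ℕ => (m : ℝ)), ¬ ψ.IsRoot x := by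
      by_contra h
      push_neg at h
      exact hinf (hroots.subset h)
    obtain ⟨m, rfl⟩ := hxmem
    refine ⟨Fin.cons m r, ?_⟩
    have : (fun i : Fin (N + 1) => ((Fin.cons m r : Fin (N+1) → ℕ) i : ℝ))
        = Fin.cons (m : ℝ) (fun i => (r i : ℝ)) := by
      funext i
      refine Fin.cases ?_ ?_ i <;> simp
    rw [this, MvPolynomial.eval_eq_eval_mv_eval']
    exact hxroot

/-- Quadric-avoidance lemma: given proper linear subspaces `M₁,…,Mₙ` of `ℝ^p` and a
nonzero symmetric matrix `A`, there is a non-negative integer vector `γ` outside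
all the `Mᵢ` and with `γᵀ A γ ≠ 0`. -/
theorem stmt_2 (p n : ℕ) (hp : 0 < p) (hn : 0 < n)
    (M : Fin n → Submodule ℝ (Fin p → ℝ)) (hM : ∀ i, M i ≠ ⊤)
    (A : Matrix (Fin p) (Fin p) ℝ) (hA : A.IsSymm) (hA0 : A ≠ 0) :
    ∃ γ : Fin p → ℕ, (∀ i, (fun j => (γ j : ℝ)) ∉ M i) ∧
      (fun j => (γ j : ℝ)) ⬝ᵥ A.mulVec (fun j => (γ j : ℝ)) ≠ 0 := by
  classical
  -- choose separating functionals for the proper subspaces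
  have hfun : ∀ i, ∃ f : Module.Dual ℝ (Fin p → ℝ), f ≠ 0 ∧ (M i).map f = ⊥ := fun i =>
    Submodule.exists_dual_map_eq_bot_of_lt_top (lt_top_iff_ne_top.mpr (hM i)) inferInstance
  choose f hf0 hfker using hfun
  -- linear polynomials
  let L : Fin n → MvPolynomial (Fin p) ℝ := fun i =>
    ∑ j, MvPolynomial.C (f i (Pi.single j 1)) * MvPolynomial.X j
  -- quadratic polynomial
  let Q : MvPolynomial (Fin p) ℝ :=
    ∑ j, ∑ k, MvPolynomial.C (A j k) * (MvPolynomial.X j * MvPolynomial.X k)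
  -- evaluation of L
  have hevalL : ∀ i (x : Fin p → ℝ), MvPolynomial.eval x (L i) = f i x := by
    intro i x
    rw [LinearMap.pi_apply_eq_sum_univ (f i) x]
    simp [L, mul_comm]
    congr 1
    funext j
    congr 1
    congr 1
    funext k
    by_cases h : j = k <;> simp [Pi.single_apply, h, eq_comm]
  -- evaluation of Q
  have hevalQ : ∀ x : Fin p → ℝ, MvPolynomial.eval x Q = x ⬝ᵥ A.mulVec x := by
    intro x
    simp [Q, dotProduct, Matrix.mulVec, Finset.mul_sum]
    apply Finset.sum_congr rfl
    intro j _
    apply Finset.sum_congr rfl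
    intro k _
    ring
  -- L i ≠ 0
  have hL0 : ∀ i, L i ≠ 0 := by
    intro i h
    apply hf0 i
    apply LinearMap.ext
    intro x
    have := hevalL i x
    rw [h, map_zero] at this
    exact this.symm
  -- Q ≠ 0
  have hQ0 : Q ≠ 0 := by
    intro h
    apply hA0
    have hz : ∀ x : Fin p → ℝ, x ⬝ᵥ A.mulVec x = 0 := by
      intro x
      rw [← hevalQ, h, map_zero]
    ext j k
    have hdiag : ∀ l, A l l = 0 := by
      intro l
      have := hz (Pi.single l 1)
      simpa [single_dotProduct, Matrix.mulVec_single] using this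
    have hsum := hz (Pi.single j 1 + Pi.single k 1)
    have hsymm : A k j = A j k := congrFun (congrFun hA.eq j) k
    rcases eq_or_ne j k with rfl | hjk
    · simpa using hdiag j
    · rw [Matrix.mulVec_add, dotProduct_add, add_dotProduct, add_dotProduct] at hsum
      simp only [single_dotProduct, one_mul, Matrix.mulVec_single, mul_one] at hsum
      simp only [MulOpposite.op_one, one_smul, Matrix.col_apply] at hsum
      show A j k = 0
      have h1 := hdiag j
      have h2 := hdiag k
      linarith [hsum, hsymm]
  -- the product polynomial
  set F : MvPolynomial (Fin p) ℝ := (∏ i, L i) * Q with hFdef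
  have hF0 : F ≠ 0 := by
    apply mul_ne_zero _ hQ0
    exact Finset.prod_ne_zero_iff.mpr fun i _ => hL0 i
  obtain ⟨γ, hγ⟩ := exists_nat_eval_ne_zero p F hF0
  refine ⟨γ, ?_, ?_⟩
  · intro i hmem
    apply hγ
    rw [hFdef, _root_.map_mul, map_prod]
    rw [Finset.prod_eq_zero (Finset.mem_univ i)]
    · ring
    · rw [hevalL]
      have : f i ((fun j => (γ j : ℝ))) ∈ (M i).map (f i) :=
        Submodule.mem_map_of_mem hmem
      rw [hfker i] at this
      simpa using this
  · intro h
    apply hγ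
    rw [hFdef, _root_.map_mul, hevalQ, h, mul_zero]
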